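/- arXiv:1006.4153 — 5 statements merged into one kernel-verified Lean document; each statement's English description precedes it below -/
import Mathlib

section
/- Let B, B′, and U be additive abelian groups and let f : U → B and g : U → B′ be group homomorphisms. Let N be the subgroup of B × B′ generated by the elements (f(u), −g(u)) for u ∈ U. If f is injective, then the homomorphism B′ → (B × B′)/N sending b′ to the class of (0, b′) is injective. -/
/-- For abelian groups `B`, `B'`, `U` and homomorphisms `f : U → B`, `g : U → B'`,
if `f` is injective then `b' ↦ (0, b')` induces an embedding of `B'` into the
amalgamated sum `(B × B') / N`, where `N` is generated by the `(f u, -g u)`. -/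
theorem stmt1 {B B' U : Type*} [AddCommGroup B] [AddCommGroup B'] [AddCommGroup U]
    (f : U →+ B) (g : U →+ B')
    (N : AddSubgroup (B × B'))
    (hN : N = AddSubgroup.closure {x : B × B' | ∃ u : U, x = (f u, -g u)})
    (hf : Function.Injective f) :
    Function.Injective (fun b' : B' => (QuotientAddGroup.mk (0, b') : (B × B') ⧸ N)) := by
  intro a b hab
  simp only at hab
  rw [QuotientAddGroup.eq] at hab
  set φ : U →+ B × B' := f.prod (-g) with hφ
  have hset : {x : B × B' | ∃ u : U, x = (f u, -g u)} = Set.range φ := by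
    ext x
    simp [hφ, AddMonoidHom.prod_apply, eq_comm]
  rw [hN, hset, ← AddMonoidHom.coe_range, AddSubgroup.closure_eq] at hab
  obtain ⟨u, hu⟩ := hab
  have h1 : f u = 0 := by simpa [hφ] using congrArg Prod.fst hu
  have h2 : u = 0 := hf (by simpa using h1)
  have h3 : -g u = -a + b := by simpa [hφ] using congrArg Prod.snd hu
  rw [h2, map_zero, neg_zero] at h3
  have : -a + b = 0 := h3.symm
  linear_combination (norm := abel) -this
end

section
/- Let U and B be abelian groups and let f, g : U → B be injective group homomorphisms. Then for every ν ∈ ℤ, the map B → P(f, g) sending b to the class of ι_ν(b) is injective; that is, each factor B embeds in the infinite free product with identical amalgamations. -/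
open DirectSum

noncomputable section

variable {U B : Type*} [AddCommGroup U] [AddCommGroup B]

/-- The relator subgroup of `⨁_{ν ∈ ℤ} B` generated by the elements
`ι_ν (f u) - ι_{ν+1} (g u)` for `ν ∈ ℤ`, `u ∈ U`. -/
def relS (f g : U →+ B) : AddSubgroup (⨁ _ : ℤ, B) :=
  AddSubgroup.closure {x | ∃ (ν : ℤ) (u : U),
    x = DirectSum.of (fun _ : ℤ => B) ν (f u) - DirectSum.of (fun _ : ℤ => B) (ν + 1) (g u)}

/-- The infinite free product `⋯ ⊕_U B ⊕_U B ⊕_U ⋯` with identical amalgamations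
`B ←g– U –f→ B`: the quotient of `⨁_{ν ∈ ℤ} B` by the relator subgroup. -/
def P (f g : U →+ B) : Type _ := (⨁ _ : ℤ, B) ⧸ relS f g

instance (f g : U →+ B) : AddCommGroup (P f g) :=
  inferInstanceAs (AddCommGroup ((⨁ _ : ℤ, B) ⧸ relS f g))

def Dmap (f g : U →+ B) : (⨁ _ : ℤ, U) →+ (⨁ _ : ℤ, B) :=
  DirectSum.toAddMonoid fun j =>
    ((DirectSum.of (fun _ : ℤ => B) j).comp f) - ((DirectSum.of (fun _ : ℤ => B) (j+1)).comp g)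

lemma Dmap_apply (f g : U →+ B) (u : ⨁ _ : ℤ, U) (k : ℤ) :
    Dmap f g u k = f (u k) - g (u (k-1)) := by
  induction u using DirectSum.induction_on with
  | zero => simp
  | of j x =>
      rw [Dmap, DirectSum.toAddMonoid_of]
      simp only [AddMonoidHom.sub_apply, AddMonoidHom.comp_apply, DirectSum.sub_apply]
      by_cases hjk : j = k
      · subst hjk
        rw [DirectSum.of_eq_same, DirectSum.of_eq_of_ne _ _ _ (by omega),
          DirectSum.of_eq_same, DirectSum.of_eq_of_ne _ _ _ (by omega)]
        simp
      · rw [DirectSum.of_eq_of_ne _ _ _ (Ne.symm hjk), DirectSum.of_eq_of_ne _ _ _ (Ne.symm hjk)]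
        by_cases hjk1 : j = k - 1
        · subst hjk1
          rw [show k - 1 + 1 = k by ring, DirectSum.of_eq_same, DirectSum.of_eq_same]
          simp
        · rw [DirectSum.of_eq_of_ne _ _ _ (by omega), DirectSum.of_eq_of_ne _ _ _ (Ne.symm hjk1)]
          simp
  | add x y hx hy =>
      simp only [map_add, DirectSum.add_apply, hx, hy]
      abel

lemma relS_le_range (f g : U →+ B) : relS f g ≤ (Dmap f g).range := by
  rw [relS]
  apply AddSubgroup.closure_le _ |>.mpr
  rintro x ⟨j, u, rfl⟩
  exact ⟨DirectSum.of (fun _ : ℤ => U) j u, by rw [Dmap, DirectSum.toAddMonoid_of]; rfl⟩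

lemma key (f g : U →+ B) (hf : Function.Injective f) (hg : Function.Injective g)
    (ν : ℤ) (b : B) (hb : DirectSum.of (fun _ : ℤ => B) ν b ∈ relS f g) : b = 0 := by
  classical
  obtain ⟨u, hu⟩ := relS_le_range f g hb
  have hrel : ∀ k : ℤ, f (u k) - g (u (k-1)) = DirectSum.of (fun _ : ℤ => B) ν b k := by
    intro k; rw [← Dmap_apply, hu]
  have hrel' : ∀ k : ℤ, k ≠ ν → f (u k) = g (u (k-1)) := by
    intro k hk
    have := hrel k
    rw [DirectSum.of_eq_of_ne _ _ _ hk] at this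
    linear_combination (norm := abel) this
  -- upper bound of support
  obtain ⟨N0, hN0⟩ := Finset.exists_le u.support
  have hN : ∀ k : ℤ, N0 + 1 ≤ k → u k = 0 := by
    intro k hk
    by_contra h
    have := hN0 k (DFinsupp.mem_support_iff.mpr h)
    omega
  -- lower bound of support
  obtain ⟨M0, hM0⟩ := Finset.exists_le (u.support.image (fun x => -x))
  have hM : ∀ k : ℤ, k ≤ -M0 - 1 → u k = 0 := by
    intro k hk
    by_contra h
    have := hM0 (-k) (Finset.mem_image_of_mem _ (DFinsupp.mem_support_iff.mpr h))
    omega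
  -- downward induction: u k = 0 for k ≥ ν
  have htop : ∀ n : ℕ, ∀ k : ℤ, ν ≤ k → N0 + 1 - k ≤ (n : ℤ) → u k = 0 := by
    intro n
    induction n with
    | zero => intro k _ hk; exact hN k (by omega)
    | succ n ih =>
        intro k hk hk2
        by_cases h : N0 + 1 - k ≤ (n : ℤ)
        · exact ih k hk h
        · have h1 : u (k + 1) = 0 := ih (k + 1) (by omega) (by omega)
          have h2 := hrel' (k + 1) (by omega)
          rw [h1, show k + 1 - 1 = k by ring, map_zero] at h2
          exact hg (by rw [← h2, map_zero])
  have htop' : ∀ k : ℤ, ν ≤ k → u k = 0 := fun k hk =>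
    htop (N0 + 1 - k).toNat k hk (by omega)
  -- upward induction: u k = 0 for k ≤ ν - 1
  have hbot : ∀ n : ℕ, ∀ k : ℤ, k ≤ ν - 1 → k - (-M0 - 1) ≤ (n : ℤ) → u k = 0 := by
    intro n
    induction n with
    | zero => intro k _ hk; exact hM k (by omega)
    | succ n ih =>
        intro k hk hk2
        by_cases h : k - (-M0 - 1) ≤ (n : ℤ)
        · exact ih k hk h
        · have h1 : u (k - 1) = 0 := ih (k - 1) (by omega) (by omega)
          have h2 := hrel' k (by omega)
          rw [h1, map_zero] at h2
          exact hf (by rw [h2, map_zero])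
  have hbot' : u (ν - 1) = 0 := hbot (ν - 1 - (-M0 - 1)).toNat (ν - 1) (by omega) (by omega)
  have := hrel ν
  rw [htop' ν le_rfl, hbot', map_zero, map_zero, DirectSum.of_eq_same] at this
  rw [← this, sub_zero]


/-- If the amalgamating maps `f, g : U → B` are injective, then each factor `B` embeds
into the infinite free product with identical amalgamations. -/
theorem stmt4 (f g : U →+ B) (hf : Function.Injective f) (hg : Function.Injective g)
    (ν : ℤ) :
    Function.Injective fun b : B =>
      (QuotientAddGroup.mk (DirectSum.of (fun _ : ℤ => B) ν b) : P f g) := by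
  intro b₁ b₂ h
  simp only at h
  rw [QuotientAddGroup.eq] at h
  have : DirectSum.of (fun _ : ℤ => B) ν (-b₁ + b₂) ∈ relS f g := by
    rw [map_add, map_neg]; exact h
  exact neg_add_eq_zero.mp (key f g hf hg ν _ this)
end
end

section
/- Let f, g : ℤ^d → ℤ^d be injective ℤ-linear maps with matrices F and G, and let Λ = ℤ[t, t⁻¹]. Let N ⊆ Λ^d be the Λ-submodule generated by the columns of the matrix t·G − F (with entries viewed in Λ). Then there is an additive group isomorphism ψ : Λ^d / N ≃ P(f, g) satisfying ψ(t · x) = μ(ψ(x)) for all x ∈ Λ^d / N; in other words, the infinite amalgamated product P(f, g), with t acting as the shift μ, is a Λ-module with square presentation matrix t·G − F. -/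
open DirectSum

noncomputable section

variable {U B : Type*} [AddCommGroup U] [AddCommGroup B]

/-- The reindexing homomorphism of `⨁_{ν ∈ ℤ} B` sending the `ν`-th summand
identically to the `(ν+1)`-st summand. -/
def shiftHom (B : Type*) [AddCommGroup B] : (⨁ _ : ℤ, B) →+ (⨁ _ : ℤ, B) :=
  DirectSum.toAddMonoid fun ν => DirectSum.of (fun _ : ℤ => B) (ν + 1)

theorem relS_le_comap (f g : U →+ B) : relS f g ≤ (relS f g).comap (shiftHom B) := by
  unfold relS
  rw [AddSubgroup.closure_le]
  rintro x ⟨ν, u, rfl⟩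
  have h : shiftHom B (DirectSum.of (fun _ : ℤ => B) ν (f u)
        - DirectSum.of (fun _ : ℤ => B) (ν + 1) (g u))
      = DirectSum.of (fun _ : ℤ => B) (ν + 1) (f u)
        - DirectSum.of (fun _ : ℤ => B) (ν + 1 + 1) (g u) := by
    rw [map_sub]
    unfold shiftHom
    rw [DirectSum.toAddMonoid_of, DirectSum.toAddMonoid_of]
  simp only [SetLike.mem_coe, AddSubgroup.mem_comap, h]
  exact AddSubgroup.subset_closure ⟨ν + 1, u, rfl⟩

/-- The shift `μ` of the infinite free product, induced by the reindexing
homomorphism of `⨁_{ν ∈ ℤ} B`. -/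
def shiftMu (f g : U →+ B) : P f g →+ P f g :=
  QuotientAddGroup.map (relS f g) (relS f g) (shiftHom B) (relS_le_comap f g)

/-! ### Auxiliary development -/

namespace Stmt5Aux

open LaurentPolynomial

variable (d : ℕ)

abbrev Lam := LaurentPolynomial ℤ
abbrev BB (d : ℕ) := Fin d → ℤ
abbrev DD (d : ℕ) := ⨁ _ : ℤ, BB d
abbrev VV (d : ℕ) := Fin d → Lam

def J (ν : ℤ) : BB d →+ VV d :=
  AddMonoidHom.mk' (fun v i => C (v i) * T ν) (by
    intro a b; funext i; simp [add_mul])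

def eHom : DD d →+ VV d := DirectSum.toAddMonoid (J d)

lemma eHom_of (ν : ℤ) (v : BB d) :
    eHom d (DirectSum.of _ ν v) = fun i => C (v i) * T ν := by
  simp [eHom, J]

def liftC (i : Fin d) : Lam →+ DD d :=
  (Finsupp.liftAddHom (fun ν =>
    (DirectSum.of (fun _ : ℤ => BB d) ν).comp (AddMonoidHom.single (fun _ : Fin d => ℤ) i))).comp
    AddMonoidAlgebra.coeffAddEquiv.toAddMonoidHom

lemma liftC_CT (i : Fin d) (c : ℤ) (ν : ℤ) :
    liftC d i (C c * T ν) = DirectSum.of (fun _ : ℤ => BB d) ν (Pi.single i c) := by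
  rw [← single_eq_C_mul_T]
  exact Finsupp.liftAddHom_apply_single (fun ν =>
    (DirectSum.of (fun _ : ℤ => BB d) ν).comp (AddMonoidHom.single (fun _ : Fin d => ℤ) i)) ν c

def kHom : VV d →+ DD d :=
  AddMonoidHom.mk' (fun x => ∑ i, liftC d i (x i)) (by
    intro a b; simp [Finset.sum_add_distrib])

lemma k_e (x : DD d) : kHom d (eHom d x) = x := by
  have : (kHom d).comp (eHom d) = AddMonoidHom.id _ := by
    refine DirectSum.addHom_ext fun ν v => ?_
    simp only [AddMonoidHom.comp_apply, eHom_of, AddMonoidHom.id_apply]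
    show ∑ i, liftC d i (C (v i) * T ν) = _
    simp only [liftC_CT]
    rw [← map_sum, Finset.univ_sum_single]
  exact DFunLike.congr_fun this x

lemma e_k_single (i : Fin d) (p : Lam) :
    eHom d (kHom d (Pi.single i p)) = Pi.single i p := by
  induction p using LaurentPolynomial.induction_on' with
  | add p q hp hq =>
    rw [Pi.single_add, map_add, map_add, hp, hq]
  | C_mul_T n a =>
    have hk : kHom d (Pi.single i (C a * T n))
        = DirectSum.of (fun _ : ℤ => BB d) n (Pi.single i a) := by
      show ∑ j, liftC d j ((Pi.single i (C a * T n) : VV d) j) = _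
      rw [Finset.sum_eq_single i]
      · rw [Pi.single_eq_same, liftC_CT]
      · intro j _ hj
        rw [Pi.single_eq_of_ne hj, map_zero]
      · intro h; exact absurd (Finset.mem_univ i) h
    rw [hk, eHom_of]
    funext j
    by_cases h : j = i
    · subst h; rw [Pi.single_eq_same, Pi.single_eq_same]
    · rw [Pi.single_eq_of_ne h, Pi.single_eq_of_ne h, map_zero, zero_mul]

lemma e_k (x : VV d) : eHom d (kHom d x) = x := by
  have : (eHom d).comp (kHom d) = AddMonoidHom.id _ :=
    AddMonoidHom.functions_ext _ _ _ fun i p => e_k_single d i p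
  exact DFunLike.congr_fun this x

def eEquiv : DD d ≃+ VV d :=
  { eHom d with
    invFun := kHom d
    left_inv := k_e d
    right_inv := e_k d }

/-! ### Shift compatibility -/

def tMulHom : VV d →+ VV d :=
  AddMonoidHom.mk' (fun y => (T 1 : Lam) • y) (fun a b => smul_add _ a b)

lemma eHom_shift (x : DD d) : eHom d (shiftHom (BB d) x) = (T 1 : Lam) • eHom d x := by
  have h : (eHom d).comp (shiftHom (BB d)) = (tMulHom d).comp (eHom d) := by
    refine DirectSum.addHom_ext fun ν v => ?_
    simp only [AddMonoidHom.comp_apply, shiftHom, DirectSum.toAddMonoid_of, eHom_of]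
    show (fun i => C (v i) * T (ν + 1)) = (T 1 : Lam) • ((fun i => C (v i) * T ν) : VV d)
    funext i
    simp only [Pi.smul_apply, smul_eq_mul]
    rw [T_add]
    ring
  exact DFunLike.congr_fun h x

def shiftInvHom (B : Type*) [AddCommGroup B] : (⨁ _ : ℤ, B) →+ (⨁ _ : ℤ, B) :=
  DirectSum.toAddMonoid fun ν => DirectSum.of (fun _ : ℤ => B) (ν - 1)

theorem relS_le_comap_inv {U B : Type*} [AddCommGroup U] [AddCommGroup B] (f g : U →+ B) :
    relS f g ≤ (relS f g).comap (shiftInvHom B) := by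
  unfold relS
  rw [AddSubgroup.closure_le]
  rintro x ⟨ν, u, rfl⟩
  have h : shiftInvHom B (DirectSum.of (fun _ : ℤ => B) ν (f u)
        - DirectSum.of (fun _ : ℤ => B) (ν + 1) (g u))
      = DirectSum.of (fun _ : ℤ => B) (ν - 1) (f u)
        - DirectSum.of (fun _ : ℤ => B) (ν - 1 + 1) (g u) := by
    rw [map_sub]
    unfold shiftInvHom
    rw [DirectSum.toAddMonoid_of, DirectSum.toAddMonoid_of,
      show ν + 1 - 1 = ν - 1 + 1 from by ring]
  simp only [SetLike.mem_coe, AddSubgroup.mem_comap, h]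
  exact AddSubgroup.subset_closure ⟨ν - 1, u, rfl⟩

lemma eHom_shiftInv (x : DD d) :
    eHom d (shiftInvHom (BB d) x) = (T (-1) : Lam) • eHom d x := by
  have h : (eHom d).comp (shiftInvHom (BB d))
      = (AddMonoidHom.mk' (fun y : VV d => (T (-1) : Lam) • y)
          (fun a b => smul_add _ a b)).comp (eHom d) := by
    refine DirectSum.addHom_ext fun ν v => ?_
    simp only [AddMonoidHom.comp_apply, shiftInvHom, DirectSum.toAddMonoid_of, eHom_of]
    show (fun i => C (v i) * T (ν - 1)) = (T (-1) : Lam) • ((fun i => C (v i) * T ν) : VV d)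
    funext i
    simp only [Pi.smul_apply, smul_eq_mul]
    rw [show ν - 1 = ν + (-1) from by ring, T_add]
    ring
  exact DFunLike.congr_fun h x

lemma kHom_T1 (y : VV d) :
    kHom d ((T 1 : Lam) • y) = shiftHom (BB d) (kHom d y) := by
  conv_lhs => rw [← e_k d y, ← eHom_shift, k_e]

lemma kHom_Tneg (y : VV d) :
    kHom d ((T (-1) : Lam) • y) = shiftInvHom (BB d) (kHom d y) := by
  conv_lhs => rw [← e_k d y, ← eHom_shiftInv, k_e]

lemma kHom_Tn_mem (f g : BB d →+ BB d) (n : ℤ) (y : VV d)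
    (h : kHom d y ∈ relS f g) : kHom d ((T n : Lam) • y) ∈ relS f g := by
  induction n using Int.induction_on with
  | zero => simpa [T_zero] using h
  | succ k ih =>
    rw [show ((k : ℤ) + 1) = 1 + k from by ring, T_add, mul_smul, kHom_T1]
    exact relS_le_comap f g ih
  | pred k ih =>
    rw [show (-(k : ℤ) - 1) = (-1) + (-k) from by ring, T_add, mul_smul, kHom_Tneg]
    exact relS_le_comap_inv f g ih

/-! ### The presentation matrix columns -/

variable {d}

def col (F G : Matrix (Fin d) (Fin d) ℤ) (j : Fin d) : VV d :=
  fun i => T 1 * ((G i j : ℤ) : Lam) - ((F i j : ℤ) : Lam)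

def genHom (f g : BB d →+ BB d) (ν : ℤ) : BB d →+ DD d :=
  ((DirectSum.of (fun _ : ℤ => BB d) ν).comp f)
    - ((DirectSum.of (fun _ : ℤ => BB d) (ν + 1)).comp g)

lemma genHom_apply (f g : BB d →+ BB d) (ν : ℤ) (u : BB d) :
    genHom f g ν u = DirectSum.of (fun _ : ℤ => BB d) ν (f u)
      - DirectSum.of (fun _ : ℤ => BB d) (ν + 1) (g u) := rfl

lemma gen_mem_relS (f g : BB d →+ BB d) (ν : ℤ) (u : BB d) :
    genHom f g ν u ∈ relS f g :=
  AddSubgroup.subset_closure ⟨ν, u, rfl⟩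

lemma eHom_gen (F G : Matrix (Fin d) (Fin d) ℤ) (ν : ℤ) (j : Fin d) (c : ℤ) :
    eHom d (DirectSum.of (fun _ : ℤ => BB d) ν (F.mulVec (Pi.single j c))
      - DirectSum.of (fun _ : ℤ => BB d) (ν + 1) (G.mulVec (Pi.single j c)))
    = -((C c * T ν) • col F G j) := by
  rw [map_sub, eHom_of, eHom_of]
  funext i
  simp only [Pi.sub_apply, Pi.smul_apply, Pi.neg_apply, smul_eq_mul, col,
    Matrix.mulVec_single, op_smul_eq_mul, Matrix.col_apply]
  rw [show ((G i j : ℤ) : Lam) = C (G i j) from (eq_intCast (C : ℤ →+* Lam) _).symm,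
    show ((F i j : ℤ) : Lam) = C (F i j) from (eq_intCast (C : ℤ →+* Lam) _).symm,
    map_mul, map_mul, show (ν + 1 : ℤ) = ν + 1 from rfl, T_add ν 1]
  ring

lemma eHom_genHom_mem (F G : Matrix (Fin d) (Fin d) ℤ) (ν : ℤ) (u : BB d) :
    eHom d (genHom F.mulVecLin.toAddMonoidHom G.mulVecLin.toAddMonoidHom ν u)
      ∈ Submodule.span Lam {v : VV d | ∃ j, v = col F G j} := by
  rw [show genHom F.mulVecLin.toAddMonoidHom G.mulVecLin.toAddMonoidHom ν u
      = ∑ j, genHom F.mulVecLin.toAddMonoidHom G.mulVecLin.toAddMonoidHom ν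
          (Pi.single j (u j)) from by rw [← map_sum, Finset.univ_sum_single],
    map_sum]
  refine Submodule.sum_mem _ fun j _ => ?_
  rw [genHom_apply]
  simp only [LinearMap.toAddMonoidHom_coe, Matrix.mulVecLin_apply]
  rw [eHom_gen]
  exact neg_mem (Submodule.smul_mem _ _ (Submodule.subset_span ⟨j, rfl⟩))

lemma col_eq (F G : Matrix (Fin d) (Fin d) ℤ) (j : Fin d) :
    col F G j = eHom d
      (- genHom F.mulVecLin.toAddMonoidHom G.mulVecLin.toAddMonoidHom 0 (Pi.single j 1)) := by
  rw [map_neg, genHom_apply]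
  simp only [LinearMap.toAddMonoidHom_coe, Matrix.mulVecLin_apply]
  rw [eHom_gen]
  simp

lemma kHom_mem_relS (F G : Matrix (Fin d) (Fin d) ℤ) {y : VV d}
    (hy : y ∈ Submodule.span Lam {v : VV d | ∃ j, v = col F G j}) :
    kHom d y ∈ relS F.mulVecLin.toAddMonoidHom G.mulVecLin.toAddMonoidHom := by
  induction hy using Submodule.span_induction with
  | mem v hv =>
    obtain ⟨j, rfl⟩ := hv
    rw [col_eq F G j, k_e]
    exact neg_mem (gen_mem_relS _ _ _ _)
  | zero => rw [map_zero]; exact zero_mem _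
  | add x y hx hy ihx ihy => rw [map_add]; exact add_mem ihx ihy
  | smul a v hv ih =>
    induction a using LaurentPolynomial.induction_on' with
    | add p q hp hq => rw [add_smul, map_add]; exact add_mem hp hq
    | C_mul_T n c =>
      have h1 : (C c * T n) • v = c • ((T n : Lam) • v) := by
        rw [mul_smul, show (C c : Lam) = ((c : ℤ) : Lam) from eq_intCast _ _,
          Int.cast_smul_eq_zsmul]
      rw [h1, map_zsmul]
      exact zsmul_mem (kHom_Tn_mem d _ _ n v ih) c

lemma map_N_eq (F G : Matrix (Fin d) (Fin d) ℤ)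
    (N : Submodule Lam (VV d))
    (hN : N = Submodule.span Lam {v : VV d | ∃ j, v = col F G j}) :
    AddSubgroup.map (↑(eEquiv d).symm) N.toAddSubgroup
      = relS F.mulVecLin.toAddMonoidHom G.mulVecLin.toAddMonoidHom := by
  subst hN
  apply le_antisymm
  · rintro x ⟨y, hy, rfl⟩
    exact kHom_mem_relS F G hy
  · show relS _ _ ≤ _
    unfold relS
    rw [AddSubgroup.closure_le]
    rintro x ⟨ν, u, rfl⟩
    refine ⟨eHom d (genHom F.mulVecLin.toAddMonoidHom G.mulVecLin.toAddMonoidHom ν u),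
      eHom_genHom_mem F G ν u, ?_⟩
    show kHom d _ = _
    rw [k_e, genHom_apply]

end Stmt5Aux

/-- If `f, g : ℤ^d → ℤ^d` are injective linear maps with matrices `F` and `G`, and
`N ⊆ Λ^d` is the `Λ = ℤ[t,t⁻¹]`-submodule generated by the columns of `t•G - F`, then
`Λ^d / N` is additively isomorphic to the infinite amalgamated product `P(f,g)`, with
multiplication by `t` corresponding to the shift `μ`; that is, `P(f,g)` is a `Λ`-module
with square presentation matrix `t•G - F`. -/
theorem stmt5 (d : ℕ) (F G : Matrix (Fin d) (Fin d) ℤ)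
    (hf : Function.Injective F.mulVecLin) (hg : Function.Injective G.mulVecLin)
    (N : Submodule (LaurentPolynomial ℤ) (Fin d → LaurentPolynomial ℤ))
    (hN : N = Submodule.span (LaurentPolynomial ℤ)
      {v : Fin d → LaurentPolynomial ℤ | ∃ j : Fin d,
        v = fun i => LaurentPolynomial.T 1 * (G i j : LaurentPolynomial ℤ)
          - (F i j : LaurentPolynomial ℤ)}) :
    ∃ ψ : ((Fin d → LaurentPolynomial ℤ) ⧸ N) ≃+
        P F.mulVecLin.toAddMonoidHom G.mulVecLin.toAddMonoidHom,
      ∀ x : (Fin d → LaurentPolynomial ℤ) ⧸ N,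
        ψ ((LaurentPolynomial.T 1 : LaurentPolynomial ℤ) • x) =
          shiftMu F.mulVecLin.toAddMonoidHom G.mulVecLin.toAddMonoidHom (ψ x) := by
  have hN' : N = Submodule.span (LaurentPolynomial ℤ)
      {v : Fin d → LaurentPolynomial ℤ | ∃ j, v = Stmt5Aux.col F G j} := by
    rw [hN]; rfl
  refine ⟨QuotientAddGroup.congr N.toAddSubgroup _ (Stmt5Aux.eEquiv d).symm
    (Stmt5Aux.map_N_eq F G N hN'), fun x => ?_⟩
  obtain ⟨y, rfl⟩ := Submodule.Quotient.mk_surjective N x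
  rw [← Submodule.Quotient.mk_smul]
  exact congrArg QuotientAddGroup.mk (Stmt5Aux.kHom_T1 d y)
end
end

section
/- Let R be a commutative ring and let 0 → N → M → M″ → 0 be a short exact sequence of R-modules. Suppose N is isomorphic to R^a / im(A) for an a × a matrix A over R, and M″ is isomorphic to R^c / im(C) for a c × c matrix C over R (matrices acting by multiplication on column vectors). Then there exists an a × c matrix D over R such that M is isomorphic to R^{a+c} / im(B), where B is the block upper-triangular matrix with diagonal blocks A and C and off-diagonal block D; in particular M has a square presentation matrix B with det B = det A · det C. -/
open scoped Matrix

private lemma linmap_pi_eq_sum_single {R M : Type*} [CommRing R] [AddCommGroup M] [Module R M]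
    {ι : Type*} [Fintype ι] [DecidableEq ι] (f : (ι → R) →ₗ[R] M) (x : ι → R) :
    f x = ∑ i, x i • f (Pi.single i 1) := by
  rw [LinearMap.pi_apply_eq_sum_univ]
  refine Finset.sum_congr rfl fun i _ => ?_
  have h : (fun j => if i = j then (1:R) else 0) = Pi.single i 1 := by
    ext j; simp [Pi.single_apply, eq_comm]
  rw [h]

/-- Given a short exact sequence `0 → N → M → M″ → 0` of `R`-modules, where `N` has
square presentation matrix `A` and `M″` has square presentation matrix `C`, the module
`M` has a square presentation matrix of block upper-triangular form `[A D; 0 C]` for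
some matrix `D`; in particular its determinant is `det A * det C`. -/
theorem stmt7 {R : Type*} [CommRing R]
    {N M M'' : Type*} [AddCommGroup N] [AddCommGroup M] [AddCommGroup M'']
    [Module R N] [Module R M] [Module R M'']
    (ι : N →ₗ[R] M) (π : M →ₗ[R] M'')
    (hι : Function.Injective ι) (hπ : Function.Surjective π)
    (hexact : LinearMap.range ι = LinearMap.ker π)
    {a c : ℕ} (A : Matrix (Fin a) (Fin a) R) (C : Matrix (Fin c) (Fin c) R)
    (eN : N ≃ₗ[R] ((Fin a → R) ⧸ LinearMap.range A.mulVecLin))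
    (eM'' : M'' ≃ₗ[R] ((Fin c → R) ⧸ LinearMap.range C.mulVecLin)) :
    ∃ D : Matrix (Fin a) (Fin c) R,
      Nonempty (M ≃ₗ[R]
        (((Fin a ⊕ Fin c) → R) ⧸
          LinearMap.range (Matrix.fromBlocks A D 0 C).mulVecLin)) ∧
      (Matrix.fromBlocks A D 0 C).det = A.det * C.det := by
  classical
  -- projections
  set pA : (Fin a → R) →ₗ[R] N :=
    eN.symm.toLinearMap ∘ₗ (LinearMap.range A.mulVecLin).mkQ with hpA_def
  set pC : (Fin c → R) →ₗ[R] M'' :=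
    eM''.symm.toLinearMap ∘ₗ (LinearMap.range C.mulVecLin).mkQ with hpC_def
  have hpA_surj : Function.Surjective pA :=
    eN.symm.surjective.comp (Submodule.mkQ_surjective _)
  have hpC_surj : Function.Surjective pC :=
    eM''.symm.surjective.comp (Submodule.mkQ_surjective _)
  have hpA_ker : LinearMap.ker pA = LinearMap.range A.mulVecLin := by
    rw [hpA_def, LinearMap.ker_comp, LinearEquiv.ker, Submodule.comap_bot,
      Submodule.ker_mkQ]
  have hpA_zero : ∀ v, pA (A *ᵥ v) = 0 := by
    intro v
    have : A *ᵥ v ∈ LinearMap.ker pA := hpA_ker ▸ ⟨v, rfl⟩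
    exact this
  have hpC_zero : ∀ v, pC (C *ᵥ v) = 0 := by
    intro v
    have hker : LinearMap.ker pC = LinearMap.range C.mulVecLin := by
      rw [hpC_def, LinearMap.ker_comp, LinearEquiv.ker, Submodule.comap_bot,
        Submodule.ker_mkQ]
    have h : C *ᵥ v ∈ LinearMap.ker pC := hker ▸ ⟨v, rfl⟩
    exact h
  -- choose lifts m j of the generators of M''
  choose m hm using fun j : Fin c => hπ (pC (Pi.single j 1))
  -- choose n j with ι (n j) = ∑ i, C i j • m i
  have hnex : ∀ j : Fin c, ∃ n : N, ι n = ∑ i, C i j • m i := by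
    intro j
    have : (∑ i, C i j • m i) ∈ LinearMap.ker π := by
      rw [LinearMap.mem_ker, map_sum]
      simp_rw [map_smul, hm]
      have : ∑ i, C i j • pC (Pi.single i 1) = pC (C *ᵥ Pi.single j 1) := by
        rw [linmap_pi_eq_sum_single pC (C *ᵥ Pi.single j 1), Matrix.mulVec_single]
        simp
      rw [this, hpC_zero]
    rw [← hexact] at this
    exact this
  choose n hn using hnex
  -- choose d j representing -(n j)
  have hdex : ∀ j : Fin c, ∃ d : Fin a → R, pA d = -(n j) := fun j => hpA_surj _
  choose d hd using hdex
  refine ⟨Matrix.of fun i j => d j i, ?_, Matrix.det_fromBlocks_zero₂₁ _ _ _⟩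
  set D : Matrix (Fin a) (Fin c) R := Matrix.of fun i j => d j i with hD
  set B : Matrix (Fin a ⊕ Fin c) (Fin a ⊕ Fin c) R := Matrix.fromBlocks A D 0 C with hB
  -- the presentation map φ
  set Lm : (Fin c → R) →ₗ[R] M := Fintype.linearCombination R m with hLm
  set φ : ((Fin a ⊕ Fin c) → R) →ₗ[R] M :=
    (ι ∘ₗ pA ∘ₗ LinearMap.funLeft R R Sum.inl) + (Lm ∘ₗ LinearMap.funLeft R R Sum.inr)
    with hφ
  have hφ_apply : ∀ x, φ x = ι (pA (x ∘ Sum.inl)) + ∑ j, x (Sum.inr j) • m j := by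
    intro x
    simp [hφ, hLm, Fintype.linearCombination_apply, LinearMap.funLeft]
  -- π ∘ φ = pC ∘ (restrict to inr)
  have hπφ : ∀ x, π (φ x) = pC (x ∘ Sum.inr) := by
    intro x
    rw [hφ_apply, map_add, map_sum]
    have h1 : π (ι (pA (x ∘ Sum.inl))) = 0 := by
      have : ι (pA (x ∘ Sum.inl)) ∈ LinearMap.ker π := hexact ▸ ⟨_, rfl⟩
      exact this
    simp_rw [map_smul, hm]
    rw [h1, zero_add, linmap_pi_eq_sum_single pC (x ∘ Sum.inr)]
    rfl
  -- φ is surjective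
  have hφ_surj : Function.Surjective φ := by
    intro u
    obtain ⟨y, hy⟩ := hpC_surj (π u)
    have : π (u - φ (Sum.elim 0 y)) = 0 := by
      rw [map_sub, hπφ, sub_eq_zero, ← hy, Sum.elim_comp_inr]
    obtain ⟨w, hw⟩ : u - φ (Sum.elim 0 y) ∈ LinearMap.range ι := by
      rw [hexact]; exact this
    obtain ⟨z, hz⟩ := hpA_surj w
    refine ⟨Sum.elim z y, ?_⟩
    have h1 : φ (Sum.elim z y) = φ (Sum.elim z 0) + φ (Sum.elim 0 y) := by
      rw [← map_add]; congr 1; ext (k | k) <;> simp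
    have h2 : φ (Sum.elim z 0) = ι w := by
      rw [hφ_apply]
      simp [hz]
    rw [h1, h2, hw]; abel
  -- kernel computation
  have hcol : ∀ j : Fin c, φ (fun i => B i (Sum.inr j)) = 0 := by
    intro j
    rw [hφ_apply]
    have h1 : ((fun i => B i (Sum.inr j)) ∘ Sum.inl) = d j := by
      ext i; simp [hB, hD]
    have h2 : ∀ k, (fun i => B i (Sum.inr j)) (Sum.inr k) = C k j := by
      intro k; simp [hB]
    rw [h1, hd]
    simp_rw [h2]
    rw [← hn, map_neg]
    abel
  have hcolA : ∀ i : Fin a, φ (fun k => B k (Sum.inl i)) = 0 := by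
    intro i
    rw [hφ_apply]
    have h1 : ((fun k => B k (Sum.inl i)) ∘ Sum.inl) = A *ᵥ Pi.single i 1 := by
      ext k; simp [hB, Matrix.mulVec_single]
    have h2 : ∀ k : Fin c, (fun k => B k (Sum.inl i)) (Sum.inr k) = 0 := by
      intro k; simp [hB]
    rw [h1, hpA_zero]
    simp_rw [h2]
    simp
  have hφB : φ ∘ₗ B.mulVecLin = 0 := by
    apply LinearMap.pi_ext
    intro s x
    have : (Pi.single s x : (Fin a ⊕ Fin c) → R) = x • (Pi.single s 1 : (Fin a ⊕ Fin c) → R) := by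
      ext k; simp [Pi.single_apply, mul_comm]
    rw [this, map_smul, map_smul]
    cases s with
    | inl i =>
      simp [Matrix.mulVecLin_apply]
      rw [show B.col (Sum.inl i) = fun k => B k (Sum.inl i) from rfl, hcolA i, smul_zero]
    | inr j =>
      simp [Matrix.mulVecLin_apply]
      rw [show B.col (Sum.inr j) = fun i => B i (Sum.inr j) from rfl, hcol j, smul_zero]
  have hker : LinearMap.ker φ = LinearMap.range B.mulVecLin := by
    apply le_antisymm
    · -- ker ⊆ range
      intro x hx
      rw [LinearMap.mem_ker] at hx
      -- π (φ x) = 0 gives x ∘ inr ∈ range C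
      have h1 : pC (x ∘ Sum.inr) = 0 := by rw [← hπφ, hx, map_zero]
      have h2 : (x ∘ Sum.inr) ∈ LinearMap.range C.mulVecLin := by
        have hkerC : LinearMap.ker pC = LinearMap.range C.mulVecLin := by
          rw [hpC_def, LinearMap.ker_comp, LinearEquiv.ker, Submodule.comap_bot,
            Submodule.ker_mkQ]
        rw [← hkerC]; exact h1
      obtain ⟨z, hz⟩ := h2
      rw [Matrix.mulVecLin_apply] at hz
      -- subtract B *ᵥ (0, z)
      set x' : (Fin a ⊕ Fin c) → R := x - B *ᵥ Sum.elim 0 z with hx'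
      have hx'inr : x' ∘ Sum.inr = 0 := by
        ext k
        simp only [hx', Pi.sub_apply, Function.comp_apply, Pi.zero_apply]
        rw [Matrix.fromBlocks_mulVec]
        simp only [Sum.elim_inr, Sum.elim_comp_inl, Sum.elim_comp_inr, Matrix.zero_mulVec, zero_add, Matrix.mulVec_zero]
        rw [hz]
        simp
      have hφx' : φ x' = 0 := by
        rw [hx', map_sub, hx, zero_sub, neg_eq_zero]
        simpa using LinearMap.congr_fun hφB (Sum.elim 0 z)
      -- now x' ∘ inl ∈ ker pA (since ι injective)
      have h3 : ι (pA (x' ∘ Sum.inl)) = 0 := by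
        rw [hφ_apply] at hφx'
        have : ∀ j, x' (Sum.inr j) • m j = 0 := by
          intro j
          have h := congr_fun hx'inr j
          simp only [Function.comp_apply, Pi.zero_apply] at h
          rw [h, zero_smul]
        simp_rw [this] at hφx'
        simpa using hφx'
      have h4 : pA (x' ∘ Sum.inl) = 0 := hι (by rw [h3, map_zero])
      have h5 : (x' ∘ Sum.inl) ∈ LinearMap.range A.mulVecLin := by
        rw [← hpA_ker]; exact h4
      obtain ⟨w, hw⟩ := h5
      rw [Matrix.mulVecLin_apply] at hw
      refine ⟨Sum.elim w z, ?_⟩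
      rw [Matrix.mulVecLin_apply]
      ext s
      cases s with
      | inl k =>
        have h := congr_fun hw k
        simp only [Function.comp_apply, hx', Pi.sub_apply] at h
        rw [Matrix.fromBlocks_mulVec] at h ⊢
        simp only [Sum.elim_inl, Sum.elim_comp_inl, Sum.elim_comp_inr, Matrix.mulVec_zero, zero_add, Pi.add_apply] at h ⊢
        rw [h]
        ring
      | inr k =>
        rw [Matrix.fromBlocks_mulVec]
        simp only [Sum.elim_inr, Sum.elim_comp_inl, Sum.elim_comp_inr, Matrix.zero_mulVec, zero_add]
        exact congr_fun hz k
    · -- range ⊆ ker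
      rintro x ⟨v, rfl⟩
      rw [LinearMap.mem_ker]
      exact LinearMap.congr_fun hφB v
  -- conclude
  have equiv1 := (LinearMap.quotKerEquivOfSurjective φ hφ_surj).symm
  rw [hker] at equiv1
  exact ⟨equiv1⟩
end

section
/- Let R be a commutative integral domain and let A : R^r → R^s be an R-linear map with r < s. Then the quotient module R^s / im(A) is not a torsion module: there exists an element m ∈ R^s / im(A) with m ≠ 0 such that c · m ≠ 0 for every nonzero c ∈ R. -/
/-- Over a commutative integral domain `R`, the cokernel of a linear map
`A : R^r → R^s` with `r < s` is not a torsion module: it contains a nonzero element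
that is not annihilated by any nonzero element of `R`. -/
theorem stmt10 {R : Type*} [CommRing R] [IsDomain R] {r s : ℕ} (hrs : r < s)
    (A : (Fin r → R) →ₗ[R] (Fin s → R)) :
    ∃ m : (Fin s → R) ⧸ LinearMap.range A,
      m ≠ 0 ∧ ∀ c : R, c ≠ 0 → c • m ≠ 0 := by
  by_contra h
  push_neg at h
  have htor : Module.IsTorsion R ((Fin s → R) ⧸ LinearMap.range A) := by
    intro m
    by_cases hm : m = 0
    · exact ⟨⟨1, mem_nonZeroDivisors_of_ne_zero one_ne_zero⟩, by simp [hm]⟩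
    · obtain ⟨c, hc, hcm⟩ := h m hm
      exact ⟨⟨c, mem_nonZeroDivisors_of_ne_zero hc⟩, hcm⟩
  have h0 : Module.rank R ((Fin s → R) ⧸ LinearMap.range A) = 0 :=
    rank_eq_zero_iff_isTorsion.mpr htor
  have heq := rank_quotient_add_rank_of_isDomain (LinearMap.range A)
  rw [h0, zero_add] at heq
  have h1 : Module.rank R ↥(LinearMap.range A) ≤ r := by
    calc Module.rank R ↥(LinearMap.range A) ≤ Module.rank R (Fin r → R) :=
          LinearMap.rank_le_of_surjective _ A.surjective_rangeRestrict
      _ = r := by simp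
  rw [heq] at h1
  simp only [rank_fun', Fintype.card_fin] at h1
  exact absurd (Nat.cast_le.mp h1) (Nat.not_le.mpr hrs)
end
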